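/- Let B = ((L₁,T₁),(L₂,T₂),σ) be a bridge satisfying (mon). Then the bridge B̄ = ((L̄₁,T₁),(L̄₂,T₂),σ) also satisfies (mon), where L̄ᵢ is the smallest fragment containing Lᵢ ∪ {¬φ : φ ∈ Lᵢ}. -/
import Mathlib


open FirstOrder Set

universe u v w u₁ v₁ u₂ v₂

namespace PaperStmt

/-- An `𝔏`-fragment: a set of `𝔏`-sentences containing `⊤` and `⊥` and
closed under `∧` and `∨`. -/
def IsFragment {L : FirstOrder.Language.{u, v}} (F : Set L.Sentence) : Prop :=
  (⊤ : L.Sentence) ∈ F ∧ (⊥ : L.Sentence) ∈ F ∧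
    ∀ φ ψ : L.Sentence, φ ∈ F → ψ ∈ F → (φ ⊓ ψ) ∈ F ∧ (φ ⊔ ψ) ∈ F

/-- `T_F = T^⊢ ∩ F`: the consequences of the theory `T` that lie in the fragment `F`. -/
def cons {L : FirstOrder.Language.{u, v}} (T : L.Theory) (F : Set L.Sentence) :
    Set L.Sentence :=
  {φ | φ ∈ F ∧ T ⊨ᵇ φ}

/-- Bundled models of `T` (in the universe matching semantic consequence `⊨ᵇ`). -/
abbrev Mod {L : FirstOrder.Language.{u, v}} (T : L.Theory) : Type (max u v + 1) :=
  FirstOrder.Language.Theory.ModelType.{u, v, max u v} T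

/-- `Th_F(M)`: the sentences in the fragment `F` true in the model `M`. -/
def th {L : FirstOrder.Language.{u, v}} {T : L.Theory} (F : Set L.Sentence) (M : Mod T) :
    Set L.Sentence :=
  {φ | φ ∈ F ∧ M ⊨ φ}

/-- The smallest fragment containing a given set of sentences. -/
def fragmentClosure {L : FirstOrder.Language.{u, v}} (S : Set L.Sentence) : Set L.Sentence :=
  ⋂₀ {F : Set L.Sentence | IsFragment F ∧ S ⊆ F}

/-- `L̄`: the smallest fragment containing `L ∪ ¬L`. -/
def negClosure {L : FirstOrder.Language.{u, v}} (F : Set L.Sentence) : Set L.Sentence :=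
  fragmentClosure (F ∪ (fun φ => ∼φ) '' F)


lemma subset_negClosure {L : FirstOrder.Language.{u, v}} (F : Set L.Sentence) :
    F ∪ (fun φ => ∼φ) '' F ⊆ negClosure F := fun φ hφ =>
  Set.mem_sInter.2 fun _ hG => hG.2 hφ

lemma negClosure_subset {L : FirstOrder.Language.{u, v}} {F G : Set L.Sentence}
    (hG : IsFragment G) (h : F ∪ (fun φ => ∼φ) '' F ⊆ G) : negClosure F ⊆ G :=
  Set.sInter_subset_of_mem ⟨hG, h⟩

/-- if a bridge `((F₁,T₁),(F₂,T₂),σ)` satisfies (mon), then so does the bridge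
`((F̄₁,T₁),(F̄₂,T₂),σ)`, where `F̄ᵢ` is the smallest fragment containing `Fᵢ ∪ ¬Fᵢ`. -/
theorem statement_9 {L₁ : FirstOrder.Language.{u₁, v₁}} {L₂ : FirstOrder.Language.{u₂, v₂}}
    {F₁ : Set L₁.Sentence} {F₂ : Set L₂.Sentence} {T₁ : L₁.Theory} {T₂ : L₂.Theory}
    (hF₁ : IsFragment F₁) (hF₂ : IsFragment F₂)
    (σ : Mod T₂ → Mod T₁)
    (hmon : ∀ M M' : Mod T₂, th F₁ (σ M) ⊆ th F₁ (σ M') → th F₂ M ⊆ th F₂ M') :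
    ∀ M M' : Mod T₂, th (negClosure F₁) (σ M) ⊆ th (negClosure F₁) (σ M') →
      th (negClosure F₂) M ⊆ th (negClosure F₂) M' := by

  intro M M' h
  -- th F₁ (σ M) = th F₁ (σ M')
  have hiff1 : ∀ φ ∈ F₁, ((σ M) ⊨ φ ↔ (σ M') ⊨ φ) := by
    intro φ hφ
    have hmemφ : φ ∈ negClosure F₁ := subset_negClosure F₁ (Or.inl hφ)
    have hmemn : (∼φ) ∈ negClosure F₁ := subset_negClosure F₁ (Or.inr ⟨φ, hφ, rfl⟩)
    constructor
    · intro hr; exact (h ⟨hmemφ, hr⟩).2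
    · intro hr
      by_contra hc
      have : (σ M) ⊨ (∼φ) := by
        simpa [FirstOrder.Language.Sentence.Realize] using hc
      have := (h ⟨hmemn, this⟩).2
      simp [FirstOrder.Language.Sentence.Realize] at this
      exact this hr
  have h12 : th F₁ (σ M) ⊆ th F₁ (σ M') := fun φ hφ => ⟨hφ.1, (hiff1 φ hφ.1).1 hφ.2⟩
  have h21 : th F₁ (σ M') ⊆ th F₁ (σ M) := fun φ hφ => ⟨hφ.1, (hiff1 φ hφ.1).2 hφ.2⟩
  have hiff2 : ∀ φ ∈ F₂, (M ⊨ φ ↔ M' ⊨ φ) := by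
    intro φ hφ
    exact ⟨fun hr => (hmon M M' h12 ⟨hφ, hr⟩).2, fun hr => (hmon M' M h21 ⟨hφ, hr⟩).2⟩
  -- the set of sentences whose truth transfers from M to M' is a fragment
  set G : Set L₂.Sentence := {φ | M ⊨ φ → M' ⊨ φ} with hGdef
  have hGfrag : IsFragment G := by
    refine ⟨fun _ => ?_, fun hb => ?_, fun φ ψ hφ hψ => ⟨?_, ?_⟩⟩
    · simp [FirstOrder.Language.Sentence.Realize]
    · exact absurd hb (by simp [FirstOrder.Language.Sentence.Realize])
    · intro hr
      simp only [FirstOrder.Language.Sentence.Realize,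
        FirstOrder.Language.Formula.realize_inf] at hr ⊢
      exact ⟨hφ hr.1, hψ hr.2⟩
    · intro hr
      simp only [FirstOrder.Language.Sentence.Realize,
        FirstOrder.Language.Formula.realize_sup] at hr ⊢
      exact Or.imp (fun a => hφ a) (fun a => hψ a) hr
  have hsubG : negClosure F₂ ⊆ G := by
    refine negClosure_subset hGfrag ?_
    rintro φ (hφ | ⟨ψ, hψ, rfl⟩)
    · exact fun hr => (hiff2 φ hφ).1 hr
    · intro hr
      simp only [FirstOrder.Language.Sentence.Realize,
        FirstOrder.Language.Formula.realize_not] at hr ⊢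
      exact fun hc => hr ((hiff2 ψ hψ).2 hc)
  exact fun φ hφ => ⟨hφ.1, hsubG hφ.1 hφ.2⟩


end PaperStmt
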